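/- There is a path from V_1 to V_2 in the graph G if and only if there is a path in normal form from V_1 to V_2, i.e., a path V_1 →_G^* V_m →_G^* V_2 whose prefix is componentwise monotonically increasing (V_i ⊑ V_{i+1} for consecutive vertices of the prefix) and whose suffix is componentwise monotonically decreasing (V_i ⊒ V_{i+1} for consecutive vertices of the suffix). -/

import Mathlib

/-- Communication operations over a message domain `D`: send `!a` or receive `?a`. -/
inductive Op (D : Type) where
  | send : D → Op D
  | recv : D → Op D
  deriving DecidableEq

/-- One transition `c →_a c'` of the broadcast network with sender `i` and receivers `R`:
the sender takes a send transition on `a`, every receiver takes a receive transition on `a`,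
and all other clients stay idle. -/
def StepAt {D Q : Type} (δ : Set (Q × Op D × Q)) (a : D) {k : ℕ}
    (c c' : Fin k → Q) (i : Fin k) (R : Set (Fin k)) : Prop :=
  i ∉ R ∧ (c i, Op.send a, c' i) ∈ δ ∧
    (∀ j ∈ R, (c j, Op.recv a, c' j) ∈ δ) ∧
    (∀ j, j ∉ R → j ≠ i → c' j = c j)

/-- A transition `c → c'` of the broadcast network (for some message, sender and receivers). -/
def Step {D Q : Type} (δ : Set (Q × Op D × Q)) {k : ℕ} (c c' : Fin k → Q) : Prop :=
  ∃ (a : D) (i : Fin k) (R : Set (Fin k)), StepAt δ a c c' i R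

/-- `post_{?a}(S)`: successors of `S` under receive transitions on `a`. -/
def postRecv {D Q : Type} (δ : Set (Q × Op D × Q)) (a : D) (S : Set Q) : Set Q :=
  {r' | ∃ r ∈ S, (r, Op.recv a, r') ∈ δ}

/-- `enabled_{?a}(S)`: states of `S` where a receive of `a` is enabled. -/
def enabledRecv {D Q : Type} (δ : Set (Q × Op D × Q)) (a : D) (S : Set Q) : Set Q :=
  {r | r ∈ S ∧ (postRecv δ a {r}).Nonempty}

/-- The edge relation `V →_G V'` of the graph `G` on tuples of subsets of `Q`. -/
def GEdge {D Q : Type} (δ : Set (Q × Op D × Q)) {m : ℕ} (V V' : Fin m → Set Q) : Prop :=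
  ∃ (a : D) (j : Fin m) (s s' : Q), s ∈ V j ∧ s' ∈ V' j ∧ (s, Op.send a, s') ∈ δ ∧
    ∃ Gen Kill : Fin m → Set Q,
      (∀ i, Gen i ⊆ postRecv δ a (V i)) ∧
      (∀ i, Kill i ⊆ enabledRecv δ a (V i)) ∧
      (∀ i, i ≠ j → V' i = (V i \ Kill i) ∪ Gen i) ∧
      (∃ U : Set Q, (U = V j ∨ U = V j \ {s}) ∧ V' j = ((U \ Kill j) ∪ Gen j) ∪ {s'}) ∧
      (∀ i, ∀ q ∈ Kill i, (postRecv δ a {q} ∩ Gen i).Nonempty)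


section NormalFormAux

lemma postRecv_mono {D Q : Type} (δ : Set (Q × Op D × Q)) (a : D) {S T : Set Q}
    (h : S ⊆ T) : postRecv δ a S ⊆ postRecv δ a T := by
  rintro r' ⟨r, hr, hδ⟩; exact ⟨r, h hr, hδ⟩

/-- From a bigger source, an edge yields an increasing edge to the union. -/
lemma edge_up {D Q : Type} {δ : Set (Q × Op D × Q)} {m : ℕ} {A B C : Fin m → Set Q}
    (h : GEdge δ B C) (hBA : ∀ i, B i ⊆ A i) :
    GEdge δ A (fun i => A i ∪ C i) := by
  obtain ⟨a, j, s, s', hs, hs', hsend, Gen, Kill, hGen, hKill, hne, ⟨U, hU, hUj⟩, h3⟩ := h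
  have hUB : U ⊆ B j := by
    rcases hU with h | h
    · exact h ▸ subset_rfl
    · exact h ▸ Set.diff_subset
  refine ⟨a, j, s, s', hBA j hs, Or.inr hs', hsend, Gen, fun _ => ∅,
    fun i => (hGen i).trans (postRecv_mono δ a (hBA i)),
    fun i => by simp, fun i hij => ?_, ⟨A j, Or.inl rfl, ?_⟩, by simp⟩
  · show A i ∪ C i = (A i \ ∅) ∪ Gen i
    rw [hne i hij]
    ext q
    have h1 := @hBA i q
    simp only [Set.mem_union, Set.mem_diff, Set.diff_empty]
    tauto
  · show A j ∪ C j = ((A j \ ∅) ∪ Gen j) ∪ {s'}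
    rw [hUj]
    ext q
    have h1 := @hBA j q
    have h2 : q ∈ U → q ∈ A j := fun hq => hBA j (hUB hq)
    simp only [Set.mem_union, Set.mem_diff, Set.mem_singleton_iff, Set.diff_empty]
    tauto

/-- An edge `B → C` can be redirected from any `A = B ∪ E` to any `E ⊇ C`. -/
lemma edge_down {D Q : Type} {δ : Set (Q × Op D × Q)} {m : ℕ} {B C A E : Fin m → Set Q}
    (h : GEdge δ B C) (hA : ∀ i, A i = B i ∪ E i) (hCE : ∀ i, C i ⊆ E i) :
    GEdge δ A E := by
  classical
  obtain ⟨a, j, s, s', hs, hs', hsend, Gen, Kill, hGen, hKill, hne, ⟨U, hU, hUj⟩, h3⟩ := h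
  have hBA : ∀ i, B i ⊆ A i := fun i => (hA i) ▸ Set.subset_union_left
  have hEA : ∀ i, E i ⊆ A i := fun i => (hA i) ▸ Set.subset_union_right
  have hUB : U ⊆ B j := by
    rcases hU with h | h
    · exact h ▸ subset_rfl
    · exact h ▸ Set.diff_subset
  have hmemU : ∀ q ∈ B j, q ≠ s → q ∈ U := by
    intro q hq hqs
    rcases hU with h | h
    · exact h ▸ hq
    · exact h ▸ ⟨hq, hqs⟩
  have hGenC : ∀ i, Gen i ⊆ C i := by
    intro i
    by_cases hij : i = j
    · subst hij; rw [hUj]; intro q hq; exact Or.inl (Or.inr hq)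
    · rw [hne i hij]; exact Set.subset_union_right
  have hGenE : ∀ i, Gen i ⊆ E i := fun i => (hGenC i).trans (hCE i)
  refine ⟨a, j, s, s', hBA j hs, hCE j hs', hsend, Gen, fun i => Kill i \ E i,
    fun i => (hGen i).trans (postRecv_mono δ a (hBA i)),
    fun i q hq => ⟨hBA i (hKill i hq.1).1, (hKill i hq.1).2⟩,
    fun i hij => ?_,
    ⟨if s ∈ E j then A j else A j \ {s}, ?_, ?_⟩,
    fun i q hq => h3 i q hq.1⟩
  · -- E i = (A i \ (Kill i \ E i)) ∪ Gen i  for i ≠ j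
    ext q
    constructor
    · intro hq
      exact Or.inl ⟨hEA i hq, fun hk => hk.2 hq⟩
    · rintro (⟨hqA, hqk⟩ | hg)
      · rcases (hA i ▸ hqA : q ∈ B i ∪ E i) with hB | hE
        · by_cases hqE : q ∈ E i
          · exact hqE
          · have hqK : q ∉ Kill i := fun hk => hqk ⟨hk, hqE⟩
            have : q ∈ C i := by rw [hne i hij]; exact Or.inl ⟨hB, hqK⟩
            exact hCE i this
        · exact hE
      · exact hGenE i hg
  · by_cases hsE : s ∈ E j
    · rw [if_pos hsE]; exact Or.inl rfl
    · rw [if_neg hsE]; exact Or.inr rfl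
  · -- E j = ((U' \ (Kill j \ E j)) ∪ Gen j) ∪ {s'}
    ext q
    constructor
    · intro hq
      refine Or.inl (Or.inl ⟨?_, fun hk => hk.2 hq⟩)
      by_cases hsE : s ∈ E j
      · rw [if_pos hsE]; exact hEA j hq
      · rw [if_neg hsE]
        exact ⟨hEA j hq, fun h => hsE (h ▸ hq)⟩
    · rintro ((⟨hqU, hqk⟩ | hg) | hq)
      · have hqA : q ∈ A j := by
          by_cases hsE : s ∈ E j
          · rw [if_pos hsE] at hqU; exact hqU
          · rw [if_neg hsE] at hqU; exact hqU.1
        by_cases hqE : q ∈ E j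
        · exact hqE
        · exfalso
          rcases (hA j ▸ hqA : q ∈ B j ∪ E j) with hB | hE
          · have hqK : q ∉ Kill j := fun hk => hqk ⟨hk, hqE⟩
            have hqs : q ≠ s := by
              by_cases hsE : s ∈ E j
              · exact fun h => hqE (h ▸ hsE)
              · rw [if_neg hsE] at hqU; exact hqU.2
            have : q ∈ C j := by
              rw [hUj]; exact Or.inl (Or.inl ⟨hmemU q hB hqs, hqK⟩)
            exact hqE (hCE j this)
          · exact hqE hE
      · exact hGenE j hg
      · exact hCE j (hUj ▸ (Or.inr hq : q ∈ ((U \ Kill j) ∪ Gen j) ∪ {s'}))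

lemma dec_subset {D Q : Type} {δ : Set (Q × Op D × Q)} {m : ℕ} {X b : Fin m → Set Q}
    (hp : Relation.ReflTransGen (fun A B => GEdge δ A B ∧ ∀ i, B i ⊆ A i) X b) :
    ∀ i, b i ⊆ X i := by
  induction hp with
  | refl => exact fun i => subset_rfl
  | tail _ h ih => exact fun i => (h.2 i).trans (ih i)

/-- Pushing an extra edge through a decreasing path. -/
lemma dec_path_union {D Q : Type} {δ : Set (Q × Op D × Q)} {m : ℕ} {X b c : Fin m → Set Q}
    (hp : Relation.ReflTransGen (fun A B => GEdge δ A B ∧ ∀ i, B i ⊆ A i) X b)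
    (he : GEdge δ b c) :
    Relation.ReflTransGen (fun A B => GEdge δ A B ∧ ∀ i, B i ⊆ A i)
      (fun i => X i ∪ c i) c := by
  induction hp using Relation.ReflTransGen.head_induction_on with
  | refl =>
      exact Relation.ReflTransGen.single
        ⟨edge_down he (fun i => rfl) (fun i => subset_rfl),
          fun i => Set.subset_union_right⟩
  | @head X y hXy hyb ih =>
      refine Relation.ReflTransGen.head ⟨?_, fun i => ?_⟩ ih
      · refine edge_down hXy.1 (fun i => ?_) (fun i => Set.subset_union_left)
        have := hXy.2 i
        ext q
        simp only [Set.mem_union]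
        have h1 := @this q
        tauto
      · exact Set.union_subset_union_left _ (hXy.2 i)

end NormalFormAux

/-- Lemma 4 (normal form): There is a path from `V₁` to `V₂` in the graph `G` iff there is a
path in normal form from `V₁` to `V₂`, i.e. a path `V₁ →_G* Vm →_G* V₂` whose prefix is
componentwise monotonically increasing and whose suffix is componentwise monotonically
decreasing. -/
theorem path_iff_normal_form_path {D Q : Type} [Fintype Q] (δ : Set (Q × Op D × Q))
    {m : ℕ} (V₁ V₂ : Fin m → Set Q) :
    Relation.ReflTransGen (GEdge δ) V₁ V₂ ↔
    ∃ Vm : Fin m → Set Q,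
      Relation.ReflTransGen (fun A B => GEdge δ A B ∧ ∀ i, A i ⊆ B i) V₁ Vm ∧
      Relation.ReflTransGen (fun A B => GEdge δ A B ∧ ∀ i, B i ⊆ A i) Vm V₂ := by
  constructor
  · intro hp
    induction hp with
    | refl => exact ⟨V₁, Relation.ReflTransGen.refl, Relation.ReflTransGen.refl⟩
    | @tail b c hVb hbc ih =>
        obtain ⟨Vm, hinc, hdec⟩ := ih
        refine ⟨fun i => Vm i ∪ c i, ?_, dec_path_union hdec hbc⟩
        exact hinc.tail ⟨edge_up hbc (dec_subset hdec), fun i => Set.subset_union_left⟩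
  · rintro ⟨Vm, h1, h2⟩
    exact (Relation.ReflTransGen.mono (fun A B h => h.1) _ _ h1).trans (Relation.ReflTransGen.mono (fun A B h => h.1) _ _ h2)
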